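/- Let r ≥ 4 be an integer and G a graph of odd order |G| ≤ 2r−1 in which every vertex has degree r except exactly one vertex of degree r−1 (a nearly r-regular graph). Then for every vertex v of G and every edge e of G, the graph G − v − e has a perfect matching. -/

import Mathlib

open SimpleGraph

/-- Number of edges of a graph. -/
noncomputable def edgeCount {V : Type*} (G : SimpleGraph V) : ℕ := G.edgeSet.ncard

/-- Degree of a vertex. -/
noncomputable def deg {V : Type*} (G : SimpleGraph V) (v : V) : ℕ := (G.neighborSet v).ncard

/-- Maximum degree. -/
noncomputable def maxDeg {V : Type*} (G : SimpleGraph V) : ℕ := sSup (Set.range (deg G))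

/-- Matching number: maximum size of a matching. -/
noncomputable def matchNum {V : Type*} (G : SimpleGraph V) : ℕ :=
  sSup {n | ∃ M : G.Subgraph, M.IsMatching ∧ M.edgeSet.ncard = n}

/-- `G` contains a copy of `H` (a subgraph isomorphic to `H`). -/
def CopyIn {α β : Type*} (H : SimpleGraph α) (G : SimpleGraph β) : Prop :=
  ∃ f : H →g G, Function.Injective f

/-- The friendship graph `F_k`: `k` triangles sharing exactly one common vertex (vertex 0). -/
def friendship (k : ℕ) : SimpleGraph (Fin (2 * k + 1)) :=
  SimpleGraph.fromRel (fun a b => a.val = 0 ∨ b.val = 0 ∨ (a.val + 1) / 2 = (b.val + 1) / 2)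

/-- The star `K_{1,m}` with center 0 and `m` leaves. -/
def starGraph (m : ℕ) : SimpleGraph (Fin (m + 1)) :=
  SimpleGraph.fromRel (fun a b => a.val = 0 ∨ b.val = 0)

/-- The matching `mK_2` of `m` disjoint edges. -/
def matchGraph (m : ℕ) : SimpleGraph (Fin (2 * m)) :=
  SimpleGraph.fromRel (fun a b => a.val / 2 = b.val / 2)

/-- Turán number: max edges of an `n`-vertex graph with no copy of `H`. -/
noncomputable def exNum (n : ℕ) {α : Type*} (H : SimpleGraph α) : ℕ :=
  sSup {m | ∃ G : SimpleGraph (Fin n), ¬ CopyIn H G ∧ edgeCount G = m}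

/-- `f(ν, Δ)`: max edges of a graph with matching number ≤ ν and max degree ≤ Δ. -/
noncomputable def fMax (ν Δ : ℕ) : ℕ :=
  sSup {m | ∃ (n : ℕ) (G : SimpleGraph (Fin n)),
    matchNum G ≤ ν ∧ (∀ v, deg G v ≤ Δ) ∧ edgeCount G = m}

/-- A surjective edge-coloring of `K_n` using exactly `r` colors `0, …, r-1`. -/
def IsSurjColoring (n r : ℕ) (c : Sym2 (Fin n) → ℕ) : Prop :=
  (∀ e : Sym2 (Fin n), ¬ e.IsDiag → c e < r) ∧
  ∀ i < r, ∃ e : Sym2 (Fin n), ¬ e.IsDiag ∧ c e = i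

/-- The colored `K_n` contains a rainbow copy of `H`. -/
def RainbowCopy {α : Type*} {n : ℕ} (c : Sym2 (Fin n) → ℕ) (H : SimpleGraph α) : Prop :=
  ∃ f : H →g (⊤ : SimpleGraph (Fin n)), Function.Injective f ∧
    Set.InjOn (fun e => c (Sym2.map (⇑f) e)) H.edgeSet

/-- Anti-Ramsey number for the pair `{K_{1,k+1}, (k+1)K_2}`. -/
noncomputable def arPair (n k : ℕ) : ℕ :=
  sInf {r | ∀ c : Sym2 (Fin n) → ℕ, IsSurjColoring n r c →
    RainbowCopy c (_root_.starGraph (k + 1)) ∨ RainbowCopy c (matchGraph (k + 1))}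

/-- Anti-Ramsey number of the friendship graph `F_k`. -/
noncomputable def arFriend (n k : ℕ) : ℕ :=
  sInf {r | ∀ c : Sym2 (Fin n) → ℕ, IsSurjColoring n r c → RainbowCopy c (friendship k)}

/-- Anti-Ramsey number of a general graph `G`. -/
noncomputable def arGraph (n : ℕ) {α : Type*} (G : SimpleGraph α) : ℕ :=
  sInf {r | ∀ c : Sym2 (Fin n) → ℕ, IsSurjColoring n r c → RainbowCopy c G}

/-- Turán number of the family `{G − e : e ∈ E(G)}`. -/
noncomputable def exFamDel (n : ℕ) {α : Type*} (G : SimpleGraph α) : ℕ :=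
  sSup {m | ∃ H : SimpleGraph (Fin n),
    (∀ e ∈ G.edgeSet, ¬ CopyIn (G.deleteEdges {e}) H) ∧ edgeCount H = m}

lemma aux_del {V : Type*} {H : SimpleGraph V} {M : H.Subgraph} (hM : M.IsMatching) (s : Set V)
    (hs : ∀ a ∈ s, ∀ b, M.Adj a b → b ∈ s) : (M.deleteVerts s).IsMatching := by
  rintro u ⟨hu1, hu2⟩
  obtain ⟨z, hz, huniq⟩ := hM hu1
  refine ⟨z, ?_, ?_⟩
  · exact SimpleGraph.Subgraph.deleteVerts_adj.mpr
      ⟨hu1, hu2, M.edge_vert hz.symm, fun hzs => hu2 (hs z hzs u hz.symm), hz⟩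
  · intro y hy
    exact huniq y (SimpleGraph.Subgraph.deleteVerts_adj.mp hy).2.2.2.2

lemma aux_sup2 {V : Type*} {H : SimpleGraph V} {A B : H.Subgraph} (hA : A.IsMatching)
    (hB : B.IsMatching) (h : Disjoint A.verts B.verts) : (A ⊔ B).IsMatching :=
  hA.sup hB (Set.disjoint_of_subset A.support_subset_verts B.support_subset_verts h)

/-- In a nearly `r`-regular graph of odd order at most `2r-1` (`r ≥ 4`), deleting any
vertex `v` and any edge `e` leaves a graph with a perfect matching. -/
theorem stmt4 {V : Type*} [Fintype V] (r : ℕ) (hr : 4 ≤ r) (G : SimpleGraph V)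
    (hodd : Odd (Fintype.card V)) (hcard : Fintype.card V ≤ 2 * r - 1)
    (w : V) (hw : deg G w = r - 1) (hreg : ∀ u, u ≠ w → deg G u = r)
    (v : V) (e : Sym2 V) (he : e ∈ G.edgeSet) :
    ∃ M : G.Subgraph, M.IsMatching ∧ M.verts = {u | u ≠ v} ∧ e ∉ M.edgeSet := by
  classical
  revert he
  induction e using Sym2.ind with
  | _ p q =>
  intro he
  have hpq : G.Adj p q := he
  have hne : p ≠ q := hpq.ne
  -- the working graph H
  set H : SimpleGraph V := G.deleteEdges ({s(p,q)} ∪ {f | v ∈ f}) with hHdef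
  have hHa : ∀ {a b : V}, H.Adj a b → G.Adj a b := fun h => h.1
  have hHadj : ∀ {a b : V}, H.Adj a b ↔ G.Adj a b ∧ s(a,b) ≠ s(p,q) ∧ a ≠ v ∧ b ≠ v := by
    intro a b
    rw [hHdef, SimpleGraph.deleteEdges_adj]
    simp only [Set.mem_union, Set.mem_singleton_iff, Set.mem_setOf_eq, Sym2.mem_iff]
    constructor
    · rintro ⟨h1, h2⟩
      push_neg at h2
      exact ⟨h1, h2.1, h2.2.1.symm, h2.2.2.symm⟩
    · rintro ⟨h1, h2, h3, h4⟩
      refine ⟨h1, ?_⟩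
      push_neg
      exact ⟨h2, h3.symm, h4.symm⟩
  have hHv : ∀ {a b : V}, H.Adj a b → a ≠ v := fun h => (hHadj.mp h).2.2.1
  have hHe : ∀ {a b : V}, H.Adj a b → s(a,b) ≠ s(p,q) := fun h => (hHadj.mp h).2.1
  have hHG : H ≤ G := by intro a b h; exact hHa h
  -- W : deficiency budget
  set W : V → ℕ := fun u => (if u = w then 1 else 0) + (if u = p ∨ u = q then 1 else 0)
    with hWdef
  have hW2 : ∀ u, W u ≤ 2 := by
    intro u; rw [hWdef]; dsimp only; split <;> split <;> omega
  have hWsplit : ∀ u, W u = (if u = w then 1 else 0) + ((if u = p then 1 else 0) + (if u = q then 1 else 0)) := by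
    intro u; rw [hWdef]; dsimp only
    by_cases h1 : u = p <;> by_cases h2 : u = q
    · exact absurd (h1.symm.trans h2) hne
    · simp [h1, h2]
      exact hne
    · simp [h1, h2]
      exact Ne.symm hne
    · simp [h1, h2]
  have hWtot : ∑ u : V, W u = 3 := by
    have : ∑ u : V, W u = ∑ u : V, ((if u = w then 1 else 0) + ((if u = p then 1 else 0) + (if u = q then 1 else 0))) :=
      Finset.sum_congr rfl fun u _ => hWsplit u
    rw [this, Finset.sum_add_distrib, Finset.sum_add_distrib]
    simp [Finset.sum_ite_eq' Finset.univ]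
  -- degrees in G
  have hdegG : ∀ u : V, (G.neighborSet u).ncard + (if u = w then 1 else 0) = r := by
    intro u
    by_cases h : u = w
    · subst h; rw [if_pos rfl]
      have := hw
      rw [deg] at this
      omega
    · rw [if_neg h]
      have := hreg u h
      rw [deg] at this
      omega
  -- lower bound on H-degrees
  have hdeg : ∀ u : V, u ≠ v → r ≤ (H.neighborSet u).ncard + 1 + W u := by
    intro u hu
    by_cases hue : u = p ∨ u = q
    · -- u is an endpoint of e : remove at most v and the other endpoint
      set z : V := if u = p then q else p with hzdef
      have hsub : G.neighborSet u \ {v, z} ⊆ H.neighborSet u := by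
        intro t ht
        obtain ⟨ht1, ht2⟩ := ht
        simp only [Set.mem_insert_iff, Set.mem_singleton_iff] at ht2
        push_neg at ht2
        have htv : t ≠ v := ht2.1
        have htz : t ≠ z := ht2.2
        have hGut : G.Adj u t := ht1
        refine hHadj.mpr ⟨hGut, ?_, hu, htv⟩
        intro hsym
        rw [Sym2.eq_iff] at hsym
        rcases hsym with ⟨h1, h2⟩ | ⟨h1, h2⟩
        · apply htz; rw [hzdef, if_pos h1]; exact h2
        · apply htz
          have hup : u ≠ p := fun hup => hne (hup.symm.trans h1)
          rw [hzdef, if_neg hup]; exact h2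
      have h1 : (G.neighborSet u).ncard ≤ (G.neighborSet u \ {v, z}).ncard + ({v, z} : Set V).ncard :=
        Set.ncard_le_ncard_diff_add_ncard _ _ (Set.toFinite _)
      have h2 : ({v, z} : Set V).ncard ≤ 2 := by
        apply le_trans (Set.ncard_insert_le _ _)
        simp
      have h3 : (G.neighborSet u \ {v, z}).ncard ≤ (H.neighborSet u).ncard :=
        Set.ncard_le_ncard hsub (Set.toFinite _)
      have h4 := hdegG u
      by_cases huw : u = w
      · have hWu : W u = 2 := by rw [hWdef]; dsimp only; rw [if_pos hue, if_pos huw]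
        rw [if_pos huw] at h4
        omega
      · have hWu : W u = 1 := by rw [hWdef]; dsimp only; rw [if_pos hue, if_neg huw]
        rw [if_neg huw] at h4
        omega
    · -- u not an endpoint of e : remove at most v
      have hsub : G.neighborSet u \ {v} ⊆ H.neighborSet u := by
        intro t ht
        obtain ⟨ht1, ht2⟩ := ht
        simp only [Set.mem_singleton_iff] at ht2
        have hGut : G.Adj u t := ht1
        refine hHadj.mpr ⟨hGut, ?_, hu, ht2⟩
        intro hsym
        rw [Sym2.eq_iff] at hsym
        rcases hsym with ⟨h1, h2⟩ | ⟨h1, h2⟩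
        · exact hue (Or.inl h1)
        · exact hue (Or.inr h1)
      have h1 : (G.neighborSet u).ncard ≤ (G.neighborSet u \ {v}).ncard + ({v} : Set V).ncard :=
        Set.ncard_le_ncard_diff_add_ncard _ _ (Set.toFinite _)
      have h2 : ({v} : Set V).ncard = 1 := Set.ncard_singleton v
      have h3 : (G.neighborSet u \ {v}).ncard ≤ (H.neighborSet u).ncard :=
        Set.ncard_le_ncard hsub (Set.toFinite _)
      have h4 := hdegG u
      by_cases huw : u = w
      · have hWu : W u = 1 := by rw [hWdef]; dsimp only; rw [if_neg hue, if_pos huw]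
        rw [if_pos huw] at h4
        omega
      · have hWu : W u = 0 := by rw [hWdef]; dsimp only; rw [if_neg hue, if_neg huw]
        rw [if_neg huw] at h4
        omega
  -- r is odd, hence r ≥ 5
  have hr5 : 5 ≤ r := by
    by_contra hcon
    have hr4 : r = 4 := by omega
    -- handshake
    haveI : DecidableRel G.Adj := Classical.decRel _
    have hhs := G.sum_degrees_eq_twice_card_edges
    have hdeq : ∀ u : V, G.degree u = (G.neighborSet u).ncard := by
      intro u
      rw [← SimpleGraph.card_neighborSet_eq_degree]
      rw [Set.ncard_eq_toFinset_card']
      congr 1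
      exact (Set.toFinset_card _).symm
    have hsum : ∑ u : V, G.degree u = ∑ u ∈ Finset.univ.erase w, G.degree u + G.degree w :=
      (Finset.sum_erase_add _ _ (Finset.mem_univ w)).symm
    have hconst : ∀ u ∈ Finset.univ.erase w, G.degree u = r := by
      intro u hu
      rw [hdeq u]
      exact hreg u (Finset.ne_of_mem_erase hu)
    have hsum2 : ∑ u ∈ Finset.univ.erase w, G.degree u = (Fintype.card V - 1) * r := by
      rw [Finset.sum_congr rfl hconst]
      rw [Finset.sum_const, smul_eq_mul]
      congr 1
      rw [Finset.card_erase_of_mem (Finset.mem_univ w), Finset.card_univ]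
    have hdw : G.degree w = r - 1 := by rw [hdeq w]; exact hw
    obtain ⟨t, ht⟩ := hodd
    have hn1 : 1 ≤ Fintype.card V := by omega
    rw [hsum, hsum2, hdw] at hhs
    -- (n-1)*r + (r-1) = 2 * |E| with n odd and r = 4 : parity contradiction
    rw [ht, hr4] at hhs
    omega
  -- choose a maximum matching M of H
  let S : Set ℕ := {k | ∃ N : H.Subgraph, N.IsMatching ∧ N.verts.ncard = k}
  have h0S : 0 ∈ S := by
    refine ⟨⊥, ?_, by simp⟩
    intro u hu
    simp only [SimpleGraph.Subgraph.verts_bot, Set.mem_empty_iff_false] at hu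
  have hbddS : BddAbove S := by
    refine ⟨Fintype.card V, ?_⟩
    rintro k ⟨N, _, rfl⟩
    calc N.verts.ncard ≤ (Set.univ : Set V).ncard :=
          Set.ncard_le_ncard (Set.subset_univ _) (Set.toFinite _)
      _ = Fintype.card V := by rw [Set.ncard_univ, Nat.card_eq_fintype_card]
  obtain ⟨M, hM, hMcard⟩ := Nat.sSup_mem ⟨0, h0S⟩ hbddS
  have hmax : ∀ N : H.Subgraph, N.IsMatching → N.verts.ncard ≤ M.verts.ncard := by
    intro N hN
    rw [hMcard]
    exact le_csSup hbddS ⟨N, hN, rfl⟩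
  -- basic facts about M
  have hMv : ∀ u ∈ M.verts, u ≠ v := by
    intro u hu
    obtain ⟨z, hz, -⟩ := hM hu
    exact hHv (M.adj_sub hz)
  -- the partner function
  let μ : V → V := fun u => if h : u ∈ M.verts then (hM h).choose else u
  have hμ1 : ∀ {u : V}, u ∈ M.verts → M.Adj u (μ u) := by
    intro u h
    show M.Adj u (if h : u ∈ M.verts then (hM h).choose else u)
    rw [dif_pos h]
    exact (hM h).choose_spec.1
  have hμ2 : ∀ {u z : V}, M.Adj u z → μ u = z := by
    intro u z h
    have hu : u ∈ M.verts := M.edge_vert h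
    show (if h : u ∈ M.verts then (hM h).choose else u) = z
    rw [dif_pos hu]
    exact ((hM hu).choose_spec.2 z h).symm
  have hμmem : ∀ {u : V}, u ∈ M.verts → μ u ∈ M.verts := fun h => M.edge_vert (hμ1 h).symm
  have hμinv : ∀ {u : V}, u ∈ M.verts → μ (μ u) = u := fun h => hμ2 (hμ1 h).symm
  have hμinj : Set.InjOn μ M.verts := by
    intro a ha b hb h
    have := hμinv ha
    rw [h, hμinv hb] at this
    exact this.symm
  -- main claim : M covers everything but v
  have hMsub : M.verts ⊆ {u | u ≠ v} := fun u hu => hMv u hu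
  have hgoal : M.verts = {u : V | u ≠ v} := by
    by_contra hcon
    have hss : M.verts ⊂ {u : V | u ≠ v} := hMsub.ssubset_of_ne hcon
    obtain ⟨x, hx1, hx2⟩ := Set.exists_of_ssubset hss
    set X : Set V := {u : V | u ≠ v} \ M.verts with hXdef
    have hxX : x ∈ X := ⟨hx1, hx2⟩
    have hXv : ∀ u ∈ X, u ≠ v := fun u hu => hu.1
    have hXM : ∀ u ∈ X, u ∉ M.verts := fun u hu => hu.2
    -- cardinalities
    haveI : Fintype ↥M.verts := Fintype.ofFinite _
    have hMeven : Even M.verts.ncard := by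
      rw [Set.ncard_eq_toFinset_card']
      exact hM.even_card
    have hsplit : ({v} ∪ (X ∪ M.verts) : Set V) = Set.univ := by
      ext u
      simp only [Set.mem_union, Set.mem_singleton_iff, Set.mem_univ, iff_true, hXdef,
        Set.mem_diff, Set.mem_setOf_eq]
      by_cases h1 : u = v
      · exact Or.inl h1
      · by_cases h2 : u ∈ M.verts
        · exact Or.inr (Or.inr h2)
        · exact Or.inr (Or.inl ⟨h1, h2⟩)
    have hdisj1 : Disjoint ({v} : Set V) (X ∪ M.verts) := by
      rw [Set.disjoint_left]
      rintro a rfl ha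
      rcases ha with h | h
      · exact hXv _ h rfl
      · exact hMv _ h rfl
    have hdisj2 : Disjoint X M.verts := by
      rw [Set.disjoint_left]
      exact fun a ha h => hXM a ha h
    have hcards : 1 + (X.ncard + M.verts.ncard) = Fintype.card V := by
      have h1 : ({v} ∪ (X ∪ M.verts) : Set V).ncard = Fintype.card V := by
        rw [hsplit, Set.ncard_univ, Nat.card_eq_fintype_card]
      rw [Set.ncard_union_eq hdisj1 (Set.toFinite _) (Set.toFinite _),
        Set.ncard_union_eq hdisj2 (Set.toFinite _) (Set.toFinite _), Set.ncard_singleton] at h1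
      exact h1
    have hXpos : 1 ≤ X.ncard := by
      rw [Nat.one_le_iff_ne_zero]
      intro h
      rw [Set.ncard_eq_zero (Set.toFinite _)] at h
      rw [h] at hxX
      exact hxX
    have hX2 : 2 ≤ X.ncard := by
      obtain ⟨t1, ht1⟩ := hodd
      obtain ⟨t2, ht2⟩ := hMeven
      omega
    obtain ⟨y, hyX, hyx⟩ : ∃ y ∈ X, y ≠ x := Set.exists_ne_of_one_lt_ncard (by omega) x
    have hdisjMxy : ∀ x' y' : V, x' ∈ X → y' ∈ X → Disjoint M.verts ({x', y'} : Set V) := by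
      intro x' y' hx' hy'
      rw [Set.disjoint_right]
      rintro a ha
      simp only [Set.mem_insert_iff, Set.mem_singleton_iff] at ha
      rcases ha with rfl | rfl
      · exact hXM _ hx'
      · exact hXM _ hy'
    have bump : ∀ x' y' : V, x' ∈ X → y' ∈ X → x' ≠ y' → ∀ N : H.Subgraph, N.IsMatching →
        N.verts = M.verts ∪ {x', y'} → False := by
      intro x' y' hx' hy' hxy' N hN hNverts
      have hcard2 : N.verts.ncard = M.verts.ncard + 2 := by
        rw [hNverts, Set.ncard_union_eq (hdisjMxy x' y' hx' hy') (Set.toFinite _) (Set.toFinite _),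
          Set.ncard_pair hxy']
      have := hmax N hN
      omega
    have no1 : ∀ x' y' : V, x' ∈ X → y' ∈ X → ¬ H.Adj x' y' := by
      intro x' y' hx' hy' hadj
      refine bump x' y' hx' hy' hadj.ne (M ⊔ H.subgraphOfAdj hadj)
        (aux_sup2 hM (SimpleGraph.Subgraph.IsMatching.subgraphOfAdj hadj) ?_) rfl
      rw [SimpleGraph.subgraphOfAdj_verts]
      exact hdisjMxy x' y' hx' hy' 
    have hNsub : ∀ x' : V, x' ∈ X → H.neighborSet x' ⊆ M.verts := by
      intro x' hx' t ht
      have hadj : H.Adj x' t := ht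
      by_contra htM
      exact no1 x' t hx' ⟨hHv hadj.symm, htM⟩ hadj
    have no3 : ∀ x' y' : V, x' ∈ X → y' ∈ X → x' ≠ y' →
        ∀ a b : V, H.Adj x' a → M.Adj a b → H.Adj b y' → False := by
      intro x' y' hx' hy' hxy' a b hxa hab hby
      have ha : a ∈ M.verts := M.edge_vert hab
      have hb : b ∈ M.verts := M.edge_vert hab.symm
      have hab' : a ≠ b := hab.ne
      have hx'M := hXM x' hx'
      have hy'M := hXM y' hy'
      have hxa' : x' ≠ a := fun h => hx'M (h ▸ ha)
      have hxb' : x' ≠ b := fun h => hx'M (h ▸ hb)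
      have hya' : y' ≠ a := fun h => hy'M (h ▸ ha)
      have hyb' : y' ≠ b := fun h => hy'M (h ▸ hb)
      have hclosed : ∀ c ∈ ({a, b} : Set V), ∀ d, M.Adj c d → d ∈ ({a, b} : Set V) := by
        rintro c hc d hcd
        simp only [Set.mem_insert_iff, Set.mem_singleton_iff] at hc ⊢
        rcases hc with rfl | rfl
        · right; rw [← hμ2 hcd, hμ2 hab]
        · left; rw [← hμ2 hcd, hμ2 hab.symm]
      have hm1 := aux_del hM {a, b} hclosed
      have hm2 : (H.subgraphOfAdj hxa ⊔ H.subgraphOfAdj hby).IsMatching := by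
        refine aux_sup2 (SimpleGraph.Subgraph.IsMatching.subgraphOfAdj hxa)
          (SimpleGraph.Subgraph.IsMatching.subgraphOfAdj hby) ?_
        rw [SimpleGraph.subgraphOfAdj_verts, SimpleGraph.subgraphOfAdj_verts, Set.disjoint_left]
        rintro c hc hc2
        simp only [Set.mem_insert_iff, Set.mem_singleton_iff] at hc hc2
        rcases hc with rfl | rfl <;> rcases hc2 with rfl | rfl
        · exact hxb' rfl
        · exact hxy' rfl
        · exact hab' rfl
        · exact hya' rfl
      have hm3 : ((M.deleteVerts {a,b}) ⊔ (H.subgraphOfAdj hxa ⊔ H.subgraphOfAdj hby)).IsMatching := by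
        refine aux_sup2 hm1 hm2 ?_
        rw [Set.disjoint_left]
        rintro c hc hc2
        simp only [SimpleGraph.Subgraph.deleteVerts_verts, Set.mem_diff, Set.mem_insert_iff,
          Set.mem_singleton_iff] at hc
        simp only [SimpleGraph.Subgraph.verts_sup, SimpleGraph.subgraphOfAdj_verts, Set.mem_union,
          Set.mem_insert_iff, Set.mem_singleton_iff] at hc2
        obtain ⟨hcM, hcab⟩ := hc
        rcases hc2 with (rfl | rfl) | (rfl | rfl)
        · exact hx'M hcM
        · exact hcab (Or.inl rfl)
        · exact hcab (Or.inr rfl)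
        · exact hy'M hcM
      refine bump x' y' hx' hy' hxy' _ hm3 ?_
      ext u
      simp only [SimpleGraph.Subgraph.verts_sup, SimpleGraph.Subgraph.deleteVerts_verts,
        SimpleGraph.subgraphOfAdj_verts, Set.mem_union, Set.mem_diff, Set.mem_insert_iff,
        Set.mem_singleton_iff]
      constructor
      · rintro (⟨h, -⟩ | ((rfl | rfl) | (rfl | rfl)))
        · exact Or.inl h
        · exact Or.inr (Or.inl rfl)
        · exact Or.inl ha
        · exact Or.inl hb
        · exact Or.inr (Or.inr rfl)
      · rintro (h | (rfl | rfl))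
        · by_cases h1 : u = a
          · exact Or.inr (Or.inl (Or.inr h1))
          · by_cases h2 : u = b
            · exact Or.inr (Or.inr (Or.inl h2))
            · exact Or.inl ⟨h, fun hh => by rcases hh with hh | hh; exact h1 hh; exact h2 hh⟩
        · exact Or.inr (Or.inl (Or.inl rfl))
        · exact Or.inr (Or.inr (Or.inr rfl))
    have no5 : ∀ x' y' : V, x' ∈ X → y' ∈ X → x' ≠ y' →
        ∀ a b c d : V, H.Adj x' a → M.Adj a b → H.Adj b c → M.Adj c d → H.Adj d y' → False := by
      intro x' y' hx' hy' hxy' a b c d hxa hab hbc hcd hdy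
      have ha : a ∈ M.verts := M.edge_vert hab
      have hb : b ∈ M.verts := M.edge_vert hab.symm
      have hc : c ∈ M.verts := M.edge_vert hcd
      have hd : d ∈ M.verts := M.edge_vert hcd.symm
      have hab' : a ≠ b := hab.ne
      have hcd' : c ≠ d := hcd.ne
      have hbc' : b ≠ c := hbc.ne
      have hac : a ≠ c := by
        rintro rfl
        have hbd : b = d := by rw [← hμ2 hab, hμ2 hcd]
        subst hbd
        exact no3 x' y' hx' hy' hxy' a b hxa hab hdy
      have had : a ≠ d := by
        rintro rfl
        have : b = c := by rw [← hμ2 hab, hμ2 hcd.symm]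
        exact hbc' this
      have hbd : b ≠ d := by
        rintro rfl
        have : a = c := by rw [← hμ2 hab.symm, hμ2 hcd.symm]
        exact hac this
      have hx'M := hXM x' hx'
      have hy'M := hXM y' hy'
      have hxa' : x' ≠ a := fun h => hx'M (h ▸ ha)
      have hxb' : x' ≠ b := fun h => hx'M (h ▸ hb)
      have hxc' : x' ≠ c := fun h => hx'M (h ▸ hc)
      have hxd' : x' ≠ d := fun h => hx'M (h ▸ hd)
      have hya' : y' ≠ a := fun h => hy'M (h ▸ ha)
      have hyb' : y' ≠ b := fun h => hy'M (h ▸ hb)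
      have hyc' : y' ≠ c := fun h => hy'M (h ▸ hc)
      have hyd' : y' ≠ d := fun h => hy'M (h ▸ hd)
      have hclosed : ∀ c' ∈ ({a, b, c, d} : Set V), ∀ d', M.Adj c' d' → d' ∈ ({a, b, c, d} : Set V) := by
        rintro c' hc' d' hcd'2
        simp only [Set.mem_insert_iff, Set.mem_singleton_iff] at hc' ⊢
        rcases hc' with rfl | rfl | rfl | rfl
        · right; left; rw [← hμ2 hcd'2, hμ2 hab]
        · left; rw [← hμ2 hcd'2, hμ2 hab.symm]
        · right; right; right; rw [← hμ2 hcd'2, hμ2 hcd]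
        · right; right; left; rw [← hμ2 hcd'2, hμ2 hcd.symm]
      have hm1 := aux_del hM {a, b, c, d} hclosed
      have hm2 : (H.subgraphOfAdj hxa ⊔ H.subgraphOfAdj hbc).IsMatching := by
        refine aux_sup2 (SimpleGraph.Subgraph.IsMatching.subgraphOfAdj hxa)
          (SimpleGraph.Subgraph.IsMatching.subgraphOfAdj hbc) ?_
        rw [SimpleGraph.subgraphOfAdj_verts, SimpleGraph.subgraphOfAdj_verts, Set.disjoint_left]
        rintro t ht ht2
        simp only [Set.mem_insert_iff, Set.mem_singleton_iff] at ht ht2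
        rcases ht with rfl | rfl <;> rcases ht2 with rfl | rfl
        · exact hxb' rfl
        · exact hxc' rfl
        · exact hab' rfl
        · exact hac rfl
      have hm23 : ((H.subgraphOfAdj hxa ⊔ H.subgraphOfAdj hbc) ⊔ H.subgraphOfAdj hdy).IsMatching := by
        refine aux_sup2 hm2 (SimpleGraph.Subgraph.IsMatching.subgraphOfAdj hdy) ?_
        rw [Set.disjoint_left]
        rintro t ht ht2
        simp only [SimpleGraph.Subgraph.verts_sup, SimpleGraph.subgraphOfAdj_verts, Set.mem_union,
          Set.mem_insert_iff, Set.mem_singleton_iff] at ht ht2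
        rcases ht with (rfl | rfl) | (rfl | rfl) <;> rcases ht2 with rfl | rfl
        · exact hxd' rfl
        · exact hxy' rfl
        · exact had rfl
        · exact hya' rfl
        · exact hbd rfl
        · exact hyb' rfl
        · exact hcd' rfl
        · exact hyc' rfl
      have hm3 : ((M.deleteVerts {a, b, c, d}) ⊔
          ((H.subgraphOfAdj hxa ⊔ H.subgraphOfAdj hbc) ⊔ H.subgraphOfAdj hdy)).IsMatching := by
        refine aux_sup2 hm1 hm23 ?_
        rw [Set.disjoint_left]
        rintro t ht ht2
        simp only [SimpleGraph.Subgraph.deleteVerts_verts, Set.mem_diff, Set.mem_insert_iff,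
          Set.mem_singleton_iff] at ht
        simp only [SimpleGraph.Subgraph.verts_sup, SimpleGraph.subgraphOfAdj_verts, Set.mem_union,
          Set.mem_insert_iff, Set.mem_singleton_iff] at ht2
        obtain ⟨htM, htab⟩ := ht
        rcases ht2 with ((rfl | rfl) | (rfl | rfl)) | (rfl | rfl)
        · exact hx'M htM
        · exact htab (Or.inl rfl)
        · exact htab (Or.inr (Or.inl rfl))
        · exact htab (Or.inr (Or.inr (Or.inl rfl)))
        · exact htab (Or.inr (Or.inr (Or.inr rfl)))
        · exact hy'M htM
      refine bump x' y' hx' hy' hxy' _ hm3 ?_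
      ext u
      simp only [SimpleGraph.Subgraph.verts_sup, SimpleGraph.Subgraph.deleteVerts_verts,
        SimpleGraph.subgraphOfAdj_verts, Set.mem_union, Set.mem_diff, Set.mem_insert_iff,
        Set.mem_singleton_iff]
      constructor
      · rintro (⟨h, -⟩ | (((rfl | rfl) | (rfl | rfl)) | (rfl | rfl)))
        · exact Or.inl h
        · exact Or.inr (Or.inl rfl)
        · exact Or.inl ha
        · exact Or.inl hb
        · exact Or.inl hc
        · exact Or.inl hd
        · exact Or.inr (Or.inr rfl)
      · rintro (h | (rfl | rfl))
        · by_cases h1 : u = a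
          · exact Or.inr (Or.inl (Or.inl (Or.inr h1)))
          · by_cases h2 : u = b
            · exact Or.inr (Or.inl (Or.inr (Or.inl h2)))
            · by_cases h3 : u = c
              · exact Or.inr (Or.inl (Or.inr (Or.inr h3)))
              · by_cases h4 : u = d
                · exact Or.inr (Or.inr (Or.inl h4))
                · refine Or.inl ⟨h, ?_⟩
                  rintro (hh | hh | hh | hh)
                  exacts [h1 hh, h2 hh, h3 hh, h4 hh]
        · exact Or.inr (Or.inl (Or.inl (Or.inl rfl)))
        · exact Or.inr (Or.inr (Or.inr rfl))
    have hBfact : ∀ x' y' : V, x' ∈ X → y' ∈ X → x' ≠ y' →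
        (H.neighborSet x').ncard + (H.neighborSet y').ncard ≤ M.verts.ncard := by
      intro x' y' hx' hy' hxy'
      have hNx := hNsub x' hx'
      have hNy := hNsub y' hy'
      have hBsub : μ '' (H.neighborSet x') ⊆ M.verts \ H.neighborSet y' := by
        rintro t ⟨a, haN, rfl⟩
        have haM : a ∈ M.verts := hNx haN
        refine ⟨hμmem haM, ?_⟩
        intro htN
        exact no3 x' y' hx' hy' hxy' a (μ a) haN (hμ1 haM) (H.adj_symm htN)
      have h1 : (μ '' (H.neighborSet x')).ncard = (H.neighborSet x').ncard :=
        Set.ncard_image_of_injOn (hμinj.mono hNx)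
      have h2 : (μ '' (H.neighborSet x')).ncard ≤ (M.verts \ H.neighborSet y').ncard :=
        Set.ncard_le_ncard hBsub (Set.toFinite _)
      have h3 : (M.verts \ H.neighborSet y').ncard + (H.neighborSet y').ncard = M.verts.ncard :=
        Set.ncard_diff_add_ncard_of_subset hNy (Set.toFinite _)
      omega
    have hxy : x ≠ y := Ne.symm hyx
    have hxv : x ≠ v := hXv x hxX
    have hyv : y ≠ v := hXv y hyX
    have hdx := hdeg x hxv
    have hdy := hdeg y hyv
    have hWxy3 : W x + W y ≤ 3 := by
      have hle : ∑ u ∈ ({x, y} : Finset V), W u ≤ ∑ u : V, W u :=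
        Finset.sum_le_sum_of_subset (Finset.subset_univ _)
      rw [Finset.sum_pair hxy] at hle
      omega
    have hCxy := hBfact x y hxX hyX hxy
    obtain ⟨t1, ht1⟩ := hodd
    obtain ⟨t2, ht2⟩ := hMeven
    have hMn : M.verts.ncard + 4 = 2*r ∧ X.ncard = 2 ∧ Fintype.card V + 1 = 2*r := by
      refine ⟨by omega, by omega, by omega⟩
    obtain ⟨hMn, hX2', hneq⟩ := hMn
    have hbadW : 2 ≤ W x + W y := by omega
    have hWonce : ∀ u1 u2 : V, u1 ∈ M.verts → u2 ∈ M.verts → u1 ≠ u2 →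
        W u1 = 0 ∨ W u2 = 0 := by
      intro u1 u2 hu1 hu2 hne12
      by_contra hcon2
      push_neg at hcon2
      obtain ⟨h1, h2⟩ := hcon2
      have hx1 : u1 ≠ x := fun h => hXM x hxX (h ▸ hu1)
      have hx2 : u2 ≠ x := fun h => hXM x hxX (h ▸ hu2)
      have hy1 : u1 ≠ y := fun h => hXM y hyX (h ▸ hu1)
      have hy2 : u2 ≠ y := fun h => hXM y hyX (h ▸ hu2)
      have hle : ∑ u ∈ ({x, y, u1, u2} : Finset V), W u ≤ ∑ u : V, W u :=
        Finset.sum_le_sum_of_subset (Finset.subset_univ _)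
      have hm1 : x ∉ ({y, u1, u2} : Finset V) := by
        simp only [Finset.mem_insert, Finset.mem_singleton]
        push_neg
        exact ⟨hxy, Ne.symm hx1, Ne.symm hx2⟩
      have hm2 : y ∉ ({u1, u2} : Finset V) := by
        simp only [Finset.mem_insert, Finset.mem_singleton]
        push_neg
        exact ⟨Ne.symm hy1, Ne.symm hy2⟩
      rw [Finset.sum_insert hm1, Finset.sum_insert hm2, Finset.sum_pair hne12] at hle
      omega
    have side : ∀ x' y' : V, x' ∈ X → y' ∈ X → x' ≠ y' →
        ∀ u a' : V, H.Adj x' a' → M.Adj a' u → W u = 0 →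
        (∀ d', H.Adj y' d' → ¬ M.Adj d' u) →
        (H.neighborSet y').ncard + r + 2 ≤ Fintype.card V := by
      intro x' y' hx' hy' hxy' u a' hxa hau hWu hnC
      have huM : u ∈ M.verts := M.edge_vert hau.symm
      have hNy := hNsub y' hy'
      have hC'sub : μ '' (H.neighborSet y') ⊆ M.verts := by
        rintro t ⟨z, hz, rfl⟩
        exact hμmem (hNy hz)
      have hC'card : (μ '' (H.neighborSet y')).ncard = (H.neighborSet y').ncard :=
        Set.ncard_image_of_injOn (hμinj.mono hNy)
      have hexc : H.neighborSet u ⊆ Set.univ \ (({v, y', u} : Set V) ∪ μ '' (H.neighborSet y')) := by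
        intro t ht
        have hadj : H.Adj u t := ht
        refine ⟨Set.mem_univ t, ?_⟩
        rintro (h3 | hC)
        · simp only [Set.mem_insert_iff, Set.mem_singleton_iff] at h3
          rcases h3 with h3 | h3 | h3
          · rw [h3] at hadj
            exact (hHv (H.adj_symm hadj)) rfl
          · rw [h3] at hadj
            exact no3 x' y' hx' hy' hxy' a' u hxa hau hadj
          · rw [h3] at hadj
            exact hadj.ne rfl
        · obtain ⟨z, hzN, rfl⟩ := hC
          have hzM : z ∈ M.verts := hNy hzN
          exact no5 x' y' hx' hy' hxy' a' u (μ z) z hxa hau hadj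
            (hμ1 hzM).symm (H.adj_symm hzN)
      have huC : u ∉ μ '' (H.neighborSet y') := by
        rintro ⟨z, hzN, hzq⟩
        refine hnC z hzN ?_
        have := hμ1 (hNy hzN)
        rwa [hzq] at this
      have hyu : y' ≠ u := fun h => hXM y' hy' (h ▸ huM)
      have hvy : v ≠ y' := Ne.symm (hXv y' hy')
      have hvu : v ≠ u := Ne.symm (hMv u huM)
      have hd1 : Disjoint ({v, y', u} : Set V) (μ '' (H.neighborSet y')) := by
        rw [Set.disjoint_left]
        rintro t ht htC
        simp only [Set.mem_insert_iff, Set.mem_singleton_iff] at ht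
        rcases ht with h | h | h
        · exact hMv _ (hC'sub htC) h
        · exact hXM y' hy' (hC'sub (h ▸ htC))
        · exact huC (h ▸ htC)
      have h3card : ({v, y', u} : Set V).ncard = 3 := by
        have hm1 : v ∉ ({y', u} : Set V) := by
          simp only [Set.mem_insert_iff, Set.mem_singleton_iff]
          push_neg
          exact ⟨hvy, hvu⟩
        have hm2 : y' ∉ ({u} : Set V) := by
          simp only [Set.mem_singleton_iff]
          exact hyu
        rw [Set.ncard_insert_of_notMem hm1 (Set.toFinite _),
          Set.ncard_insert_of_notMem hm2 (Set.toFinite _), Set.ncard_singleton]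
      have hucard : ((({v, y', u} : Set V) ∪ μ '' (H.neighborSet y'))).ncard
          = 3 + (H.neighborSet y').ncard := by
        rw [Set.ncard_union_eq hd1 (Set.toFinite _) (Set.toFinite _), h3card, hC'card]
      have hle1 := Set.ncard_le_ncard hexc (Set.toFinite _)
      have hle2 := Set.ncard_diff_add_ncard_of_subset
        (Set.subset_univ ((({v, y', u} : Set V) ∪ μ '' (H.neighborSet y')))) (Set.toFinite _)
      rw [Set.ncard_univ, Nat.card_eq_fintype_card] at hle2
      have hdu := hdeg u (hMv u huM)
      omega
    -- the two neighbour-partner sets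
    have hNx := hNsub x hxX
    have hNy := hNsub y hyX
    have hBsub : μ '' (H.neighborSet x) ⊆ M.verts := by
      rintro t ⟨z, hz, rfl⟩
      exact hμmem (hNx hz)
    have hCsub : μ '' (H.neighborSet y) ⊆ M.verts := by
      rintro t ⟨z, hz, rfl⟩
      exact hμmem (hNy hz)
    have hBcard : (μ '' (H.neighborSet x)).ncard = (H.neighborSet x).ncard :=
      Set.ncard_image_of_injOn (hμinj.mono hNx)
    have hCcard : (μ '' (H.neighborSet y)).ncard = (H.neighborSet y).ncard :=
      Set.ncard_image_of_injOn (hμinj.mono hNy)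
    have hBmem : ∀ t ∈ μ '' (H.neighborSet x), ∃ z, z ∈ H.neighborSet x ∧ M.Adj z t := by
      rintro t ⟨z, hz, rfl⟩
      exact ⟨z, hz, hμ1 (hNx hz)⟩
    have hCmem : ∀ t ∈ μ '' (H.neighborSet y), ∃ z, z ∈ H.neighborSet y ∧ M.Adj z t := by
      rintro t ⟨z, hz, rfl⟩
      exact ⟨z, hz, hμ1 (hNy hz)⟩
    by_cases hcase : ∃ c0, c0 ∈ (μ '' (H.neighborSet x)) ∩ (μ '' (H.neighborSet y)) ∧ W c0 = 0
    · -- a common partner with zero deficiency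
      obtain ⟨c0, ⟨hc0B, hc0C⟩, hWc0⟩ := hcase
      obtain ⟨a0, ha0N, ha0M⟩ := hBmem c0 hc0B
      obtain ⟨d0, hd0N, hd0M⟩ := hCmem c0 hc0C
      have hc0M : c0 ∈ M.verts := hBsub hc0B
      have hexc : H.neighborSet c0 ⊆ Set.univ \ (({v, x, y} : Set V) ∪
          (μ '' (H.neighborSet x) ∪ μ '' (H.neighborSet y))) := by
        intro t ht
        have hadj : H.Adj c0 t := ht
        refine ⟨Set.mem_univ t, ?_⟩
        rintro (h3 | hBC)
        · simp only [Set.mem_insert_iff, Set.mem_singleton_iff] at h3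
          rcases h3 with h3 | h3 | h3
          · rw [h3] at hadj
            exact (hHv (H.adj_symm hadj)) rfl
          · rw [h3] at hadj
            exact no3 x y hxX hyX hxy c0 d0 (H.adj_symm hadj) hd0M.symm (H.adj_symm hd0N)
          · rw [h3] at hadj
            exact no3 x y hxX hyX hxy a0 c0 ha0N ha0M hadj
        · rcases hBC with hB | hC
          · obtain ⟨a1, ha1N, ha1M⟩ := hBmem t hB
            exact no5 x y hxX hyX hxy a1 t c0 d0 ha1N ha1M (H.adj_symm hadj)
              hd0M.symm (H.adj_symm hd0N)
          · obtain ⟨d1, hd1N, hd1M⟩ := hCmem t hC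
            exact no5 x y hxX hyX hxy a0 c0 t d1 ha0N ha0M hadj
              hd1M.symm (H.adj_symm hd1N)
      have hvx : v ≠ x := Ne.symm hxv
      have hvy : v ≠ y := Ne.symm hyv
      have hd1 : Disjoint ({v, x, y} : Set V)
          (μ '' (H.neighborSet x) ∪ μ '' (H.neighborSet y)) := by
        rw [Set.disjoint_left]
        rintro t ht htC
        have htM : t ∈ M.verts := by
          rcases htC with h | h
          · exact hBsub h
          · exact hCsub h
        simp only [Set.mem_insert_iff, Set.mem_singleton_iff] at ht
        rcases ht with h | h | h
        · exact hMv t htM h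
        · exact hXM x hxX (h ▸ htM)
        · exact hXM y hyX (h ▸ htM)
      have h3card : ({v, x, y} : Set V).ncard = 3 := by
        have hm1 : v ∉ ({x, y} : Set V) := by
          simp only [Set.mem_insert_iff, Set.mem_singleton_iff]
          push_neg
          exact ⟨hvx, hvy⟩
        have hm2 : x ∉ ({y} : Set V) := by
          simp only [Set.mem_singleton_iff]
          exact hxy
        rw [Set.ncard_insert_of_notMem hm1 (Set.toFinite _),
          Set.ncard_insert_of_notMem hm2 (Set.toFinite _), Set.ncard_singleton]
      have hucard : ((({v, x, y} : Set V) ∪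
          (μ '' (H.neighborSet x) ∪ μ '' (H.neighborSet y)))).ncard
          = 3 + (μ '' (H.neighborSet x) ∪ μ '' (H.neighborSet y)).ncard := by
        rw [Set.ncard_union_eq hd1 (Set.toFinite _) (Set.toFinite _), h3card]
      have hui := Set.ncard_union_add_ncard_inter (μ '' (H.neighborSet x))
        (μ '' (H.neighborSet y)) (Set.toFinite _) (Set.toFinite _)
      have hiB : ((μ '' (H.neighborSet x)) ∩ (μ '' (H.neighborSet y))).ncard
          ≤ (μ '' (H.neighborSet x)).ncard :=
        Set.ncard_le_ncard Set.inter_subset_left (Set.toFinite _)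
      have hiC : ((μ '' (H.neighborSet x)) ∩ (μ '' (H.neighborSet y))).ncard
          ≤ (μ '' (H.neighborSet y)).ncard :=
        Set.ncard_le_ncard Set.inter_subset_right (Set.toFinite _)
      have hle1 := Set.ncard_le_ncard hexc (Set.toFinite _)
      have hle2 := Set.ncard_diff_add_ncard_of_subset
        (Set.subset_univ ((({v, x, y} : Set V) ∪
          (μ '' (H.neighborSet x) ∪ μ '' (H.neighborSet y))))) (Set.toFinite _)
      rw [Set.ncard_univ, Nat.card_eq_fintype_card] at hle2
      have hdc0 := hdeg c0 (hMv c0 hc0M)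
      omega
    · push_neg at hcase
      have pick : ∀ B' C' : Set V, B' ⊆ M.verts → C' ⊆ M.verts → 2 ≤ B'.ncard →
          (∀ c0, c0 ∈ B' ∩ C' → W c0 ≠ 0) → ∃ u, u ∈ B' ∧ u ∉ C' ∧ W u = 0 := by
        intro B' C' hB' hC' h2B hb
        obtain ⟨u1, u2, hu1, hu2, hne12⟩ := (Set.one_lt_ncard_iff (Set.toFinite B')).mp (by omega)
        by_cases h1C : u1 ∈ C'
        · have w1 : W u1 ≠ 0 := hb u1 ⟨hu1, h1C⟩
          by_cases h2C : u2 ∈ C'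
          · exact absurd (hWonce u1 u2 (hB' hu1) (hB' hu2) hne12)
              (by push_neg; exact ⟨w1, hb u2 ⟨hu2, h2C⟩⟩)
          · exact ⟨u2, hu2, h2C,
              (hWonce u1 u2 (hB' hu1) (hB' hu2) hne12).resolve_left w1⟩
        · by_cases hW1 : W u1 = 0
          · exact ⟨u1, hu1, h1C, hW1⟩
          · by_cases h2C : u2 ∈ C'
            · exact absurd (hWonce u1 u2 (hB' hu1) (hB' hu2) hne12)
                (by push_neg; exact ⟨hW1, hb u2 ⟨hu2, h2C⟩⟩)
            · exact ⟨u2, hu2, h2C,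
                (hWonce u1 u2 (hB' hu1) (hB' hu2) hne12).resolve_left hW1⟩
      have h2B : 2 ≤ (μ '' (H.neighborSet x)).ncard := by
        have := hW2 x
        omega
      have h2C : 2 ≤ (μ '' (H.neighborSet y)).ncard := by
        have := hW2 y
        omega
      obtain ⟨u, huB, huC, hWu⟩ := pick _ _ hBsub hCsub h2B hcase
      obtain ⟨a1, ha1N, ha1M⟩ := hBmem u huB
      have h1 := side x y hxX hyX hxy u a1 ha1N ha1M hWu
        (fun d' hd' hM' => huC ⟨d', hd', hμ2 hM'⟩)
      obtain ⟨u', hu'C, hu'B, hWu'⟩ := pick _ _ hCsub hBsub h2C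
        (fun c0 hc0 => hcase c0 ⟨hc0.2, hc0.1⟩)
      obtain ⟨d1, hd1N, hd1M⟩ := hCmem u' hu'C
      have h2 := side y x hyX hxX (Ne.symm hxy) u' d1 hd1N hd1M hWu'
        (fun d' hd' hM' => hu'B ⟨d', hd', hμ2 hM'⟩)
      omega
  -- convert the matching of H into the required subgraph of G
  refine ⟨M.map (SimpleGraph.Hom.ofLE hHG), hM.map_ofLE hHG, ?_, ?_⟩
  · rw [← hgoal]
    simp
  · intro hmem
    rw [SimpleGraph.Subgraph.mem_edgeSet] at hmem
    rw [SimpleGraph.Subgraph.map_adj] at hmem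
    obtain ⟨a, b, hab, ha, hb⟩ := hmem
    simp only [SimpleGraph.Hom.coe_ofLE, id_eq] at ha hb
    subst ha hb
    exact hHe (M.adj_sub hab) rfl
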